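/- Every hamiltonian-connected graph on at least four vertices has toughness strictly larger than 1; that is, for every vertex cut S with ω(G−S) ≥ 2 we have ω(G−S) < |S|. -/

import Mathlib

open SimpleGraph

variable {V : Type*}

/-- The number of connected components after deleting the vertex set `S`. -/
noncomputable def omegaDel [Fintype V] (G : SimpleGraph V) (S : Finset V) : ℕ :=
  Nat.card ((G.induce ((S : Set V)ᶜ)).ConnectedComponent)

/-- `G` is `m`-connected. -/
def IsKConn [Fintype V] (G : SimpleGraph V) (m : ℕ) : Prop :=
  m < Fintype.card V ∧ ∀ S : Finset V, S.card < m → (G.induce ((S : Set V)ᶜ)).Connected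

/-- The independence number of `G`. -/
noncomputable def alphaNum [Fintype V] (G : SimpleGraph V) : ℕ :=
  sSup {n | ∃ s : Finset V, (∀ a ∈ s, ∀ b ∈ s, ¬ G.Adj a b) ∧ s.card = n}

/-- The minimum degree of `G`. -/
noncomputable def minDeg [Fintype V] (G : SimpleGraph V) : ℕ :=
  sInf {d | ∃ v : V, (G.neighborSet v).ncard = d}

/-- The graph `K₂ ∪ kK₁`. -/
def K2kK1 (k : ℕ) : SimpleGraph (Fin 2 ⊕ Fin k) :=
  SimpleGraph.fromRel fun a b => a.isLeft ∧ b.isLeft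

/-- `G` contains no induced copy of `H`. -/
def IndFree {W : Type*} (H : SimpleGraph W) (G : SimpleGraph V) : Prop :=
  IsEmpty (H ↪g G)

/-- `G` has a hamiltonian cycle. -/
def Ham [DecidableEq V] (G : SimpleGraph V) : Prop :=
  ∃ (a : V) (p : G.Walk a a), p.IsHamiltonianCycle

/-- `G` is hamiltonian-connected. -/
def HamConn [DecidableEq V] (G : SimpleGraph V) : Prop :=
  ∀ a b : V, a ≠ b → ∃ p : G.Walk a b, p.IsHamiltonian

/-- The Petersen graph. -/
def petersen : SimpleGraph (ZMod 5 ⊕ ZMod 5) :=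
  SimpleGraph.fromRel fun a b =>
    match a, b with
    | Sum.inl i, Sum.inl j => i = j + 1
    | Sum.inr i, Sum.inr j => i = j + 2
    | Sum.inl i, Sum.inr j => i = j
    | _, _ => False


lemma aux_support_get {V : Type*} {G : SimpleGraph V} {a b : V} (p : G.Walk a b) :
    ∀ (i : ℕ) (h : i < p.support.length), p.support.get ⟨i, h⟩ = p.getVert i := by
  induction p with
  | nil =>
    intro i h
    simp only [Walk.support_nil, List.length_singleton] at h
    interval_cases i
    simp [Walk.getVert]
  | cons hadj q ih =>
    intro i h
    cases i with
    | zero => simp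
    | succ n =>
      simp only [Walk.support_cons, List.get_cons_succ]
      exact ih n (by simp only [Walk.support_cons, List.length_cons] at h; omega)

lemma aux_reach {V : Type*} {G : SimpleGraph V} {T : Set V} :
    ∀ {a b : V} (p : G.Walk a b), (∀ x ∈ p.support, x ∈ T) →
      ∀ (ha : a ∈ T) (hb : b ∈ T), (G.induce T).Reachable ⟨a, ha⟩ ⟨b, hb⟩ := by
  intro a b p
  induction p with
  | nil => intro _ ha hb; exact Reachable.refl _
  | @cons a c b hadj q ih =>
    intro h ha hb
    have hc : c ∈ T := h c (by simp)
    have h1 : (G.induce T).Adj ⟨a, ha⟩ ⟨c, hc⟩ := by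
      simp only [comap_adj, Function.Embedding.coe_subtype]
      exact hadj
    exact h1.reachable.trans (ih (fun x hx => h x (by simp [hx])) hc hb)

lemma aux_key1 {V : Type*} [DecidableEq V] {G : SimpleGraph V} {x y s w : V} (p : G.Walk x y)
    (hnd : p.support.Nodup) (hw : w ∈ p.support) (hws : w ≠ s) :
    (∃ q : G.Walk x w, s ∉ q.support) ∨ (∃ q : G.Walk w y, s ∉ q.support) := by
  by_cases hs : s ∈ p.support
  · have hsup : p.support = (p.takeUntil s hs).support ++ (p.dropUntil s hs).support.tail :=
      ((Walk.support_append _ _).symm.trans (congrArg Walk.support (p.take_spec hs))).symm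
    have hnd2 : ((p.takeUntil s hs).support ++ (p.dropUntil s hs).support.tail).Nodup :=
      hsup ▸ hnd
    rcases List.nodup_append.mp hnd2 with ⟨hq, ht, hdisj⟩
    set q := p.takeUntil s hs with hqdef
    set r := p.dropUntil s hs with hrdef
    by_cases hwq : w ∈ q.support
    · left
      refine ⟨q.takeUntil w hwq, fun hsq' => ?_⟩
      have hsup2 : q.support = (q.takeUntil w hwq).support ++ (q.dropUntil w hwq).support.tail :=
        ((Walk.support_append _ _).symm.trans (congrArg Walk.support (q.take_spec hwq))).symm
      have hs3 : s ∈ (q.dropUntil w hwq).support.tail := by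
        have hs2 : s ∈ (q.dropUntil w hwq).support := Walk.end_mem_support _
        rw [Walk.support_eq_cons] at hs2
        rcases List.mem_cons.mp hs2 with h | h
        · exact absurd h.symm hws
        · exact h
      rw [hsup2] at hq
      exact (List.nodup_append.mp hq).2.2 s hsq' s hs3 rfl
    · right
      have hwr : w ∈ r.support := by
        have hw' : w ∈ q.support ++ r.support.tail := hsup ▸ hw
        rcases List.mem_append.mp hw' with h1 | h2
        · exact absurd h1 hwq
        · exact List.mem_of_mem_tail h2
      refine ⟨r.dropUntil w hwr, fun hscon => ?_⟩
      have hst : s ∉ r.support.tail := fun h => hdisj s (Walk.end_mem_support q) s h rfl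
      have hsub : (r.dropUntil w hwr).support.tail ⊆ r.support.tail := by
        have hsup3 : r.support = (r.takeUntil w hwr).support ++ (r.dropUntil w hwr).support.tail :=
          ((Walk.support_append _ _).symm.trans (congrArg Walk.support (r.take_spec hwr))).symm
        have : r.support.tail = (r.takeUntil w hwr).support.tail ++ (r.dropUntil w hwr).support.tail := by
          rw [hsup3, List.tail_append_of_ne_nil (Walk.support_ne_nil _)]
        rw [this]
        exact List.subset_append_right _ _
      rw [Walk.support_eq_cons] at hscon
      rcases List.mem_cons.mp hscon with h | h
      · exact hws h.symm
      · exact hst (hsub h)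
  · exact Or.inl ⟨p.takeUntil w hw, fun h => hs (Walk.support_takeUntil_subset _ hw h)⟩


lemma aux_support_get' {V : Type*} {G : SimpleGraph V} {a b : V} (p : G.Walk a b) :
    ∀ (i : ℕ) (h : i < p.support.length), p.support.get ⟨i, h⟩ = p.getVert i := by
  induction p with
  | nil =>
    intro i h
    simp only [Walk.support_nil, List.length_singleton] at h
    interval_cases i
    simp [Walk.getVert]
  | cons hadj q ih =>
    intro i h
    cases i with
    | zero => simp
    | succ n =>
      simp only [Walk.support_cons, List.get_cons_succ]
      exact ih n (by simp only [Walk.support_cons, List.length_cons] at h; omega)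

lemma aux_count {V : Type*} [Fintype V] [DecidableEq V] (G : SimpleGraph V) (S : Finset V)
    {u v : V} (hu : u ∈ S) (hv : v ∈ S) (p : G.Walk u v) (hp : p.IsHamiltonian) :
    Nat.card ((G.induce ((S : Set V)ᶜ)).ConnectedComponent) ≤ S.card - 1 := by
  classical
  set T : Set V := ((S : Set V)ᶜ) with hT
  set G' := G.induce T with hG'
  set L := p.support with hL
  have hnd : L.Nodup := hp.isPath.support_nodup
  have hmem : ∀ x : V, x ∈ L := hp.mem_support
  have hlen : L.length = p.length + 1 := Walk.length_support p
  set sC : G'.ConnectedComponent → Finset ℕ := fun C =>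
    (Finset.univ.filter fun x : T => G'.connectedComponentMk x = C).image
      (fun x : T => L.idxOf (x : V)) with hsC
  have hne : ∀ C, (sC C).Nonempty := by
    intro C; obtain ⟨x, hx⟩ := C.exists_rep
    exact ⟨_, Finset.mem_image.mpr ⟨x, Finset.mem_filter.mpr ⟨Finset.mem_univ _, hx⟩, rfl⟩⟩
  set N : G'.ConnectedComponent → ℕ := fun C => (sC C).max' (hne C) with hN
  have hwit : ∀ C, ∃ x : T, G'.connectedComponentMk x = C ∧ L.idxOf (x : V) = N C := by
    intro C
    obtain ⟨x, hx1, hx2⟩ := Finset.mem_image.mp (Finset.max'_mem (sC C) (hne C))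
    exact ⟨x, (Finset.mem_filter.mp hx1).2, hx2⟩
  have hNlt : ∀ C, N C < p.length := by
    intro C
    obtain ⟨x, hxC, hxN⟩ := hwit C
    have h1 : L.idxOf (x : V) < L.length := List.idxOf_lt_length_of_mem (hmem _)
    rw [hxN] at h1
    have h2 : N C ≤ p.length := by omega
    rcases h2.lt_or_eq with h | h
    · exact h
    · exfalso
      have e2 : L.get ⟨N C, by omega⟩ = (x : V) := by
        simp only [← hxN]
        exact List.idxOf_get _
      have e1 : L.get ⟨N C, by omega⟩ = p.getVert (N C) := aux_support_get' p _ _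
      have hxv : (x : V) = v := by
        rw [← e2, e1, h, Walk.getVert_length]
      have hxS : (x : V) ∉ S := x.2
      exact hxS (by rw [hxv]; exact hv)
  have hstep : ∀ C, p.getVert (N C + 1) ∈ S ∧ p.getVert (N C + 1) ≠ u := by
    intro C
    obtain ⟨x, hxC, hxN⟩ := hwit C
    have hNp : N C < p.length := hNlt C
    have hadj : G.Adj (p.getVert (N C)) (p.getVert (N C + 1)) := Walk.adj_getVert_succ p hNp
    have e2 : L.get ⟨N C, by omega⟩ = (x : V) := by
      simp only [← hxN]
      exact List.idxOf_get _
    have e1 : L.get ⟨N C, by omega⟩ = p.getVert (N C) := aux_support_get' p _ _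
    have hxval : p.getVert (N C) = (x : V) := e1 ▸ e2
    have hlt1 : N C + 1 < L.length := by omega
    have ey : L.get ⟨N C + 1, hlt1⟩ = p.getVert (N C + 1) := aux_support_get' p _ _
    constructor
    · by_contra hyS
      have hyT : p.getVert (N C + 1) ∈ T := by
        rw [hT]; exact hyS
      have hadj' : G'.Adj x ⟨p.getVert (N C + 1), hyT⟩ := by
        rw [hG']
        simp only [comap_adj, Function.Embedding.coe_subtype]
        rw [← hxval]; exact hadj
      have hCy : G'.connectedComponentMk ⟨p.getVert (N C + 1), hyT⟩ = C := by
        exact (ConnectedComponent.sound hadj'.reachable).symm.trans hxC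
      have hyIdx : L.idxOf (p.getVert (N C + 1)) = N C + 1 := by
        have hmy := List.idxOf_lt_length_of_mem (hmem (p.getVert (N C + 1)))
        have e3 : L.get ⟨L.idxOf (p.getVert (N C + 1)), hmy⟩ = p.getVert (N C + 1) :=
          List.idxOf_get _
        have := List.nodup_iff_injective_get.mp hnd (e3.trans ey.symm)
        exact congrArg Fin.val this
      have hmemC : L.idxOf (p.getVert (N C + 1)) ∈ sC C :=
        Finset.mem_image.mpr ⟨⟨_, hyT⟩, Finset.mem_filter.mpr ⟨Finset.mem_univ _, hCy⟩, rfl⟩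
      have h5 : L.idxOf (p.getVert (N C + 1)) ≤ N C := Finset.le_max' _ _ hmemC
      omega
    · intro hyu
      have h0lt : 0 < L.length := by omega
      have e0 : L.get ⟨0, h0lt⟩ = p.getVert 0 := aux_support_get' p _ _
      have : (⟨N C + 1, hlt1⟩ : Fin L.length) = ⟨0, h0lt⟩ :=
        List.nodup_iff_injective_get.mp hnd (by rw [ey, e0, hyu, Walk.getVert_zero])
      simpa using congrArg Fin.val this
  set f : G'.ConnectedComponent → ↥(S.erase u) := fun C =>
    ⟨p.getVert (N C + 1), Finset.mem_erase.mpr ⟨(hstep C).2, (hstep C).1⟩⟩ with hf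
  have hinj : Function.Injective f := by
    intro C C' h
    have h1 : p.getVert (N C + 1) = p.getVert (N C' + 1) := Subtype.ext_iff.mp h
    have hlt1 : N C + 1 < L.length := by have := hNlt C; omega
    have hlt1' : N C' + 1 < L.length := by have := hNlt C'; omega
    have ey : L.get ⟨N C + 1, hlt1⟩ = p.getVert (N C + 1) := aux_support_get' p _ _
    have ey' : L.get ⟨N C' + 1, hlt1'⟩ = p.getVert (N C' + 1) := aux_support_get' p _ _
    have hNN : N C = N C' := by
      have := List.nodup_iff_injective_get.mp hnd ((ey.trans h1).trans ey'.symm)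
      have := congrArg Fin.val this
      simpa using this
    obtain ⟨x, hxC, hxN⟩ := hwit C
    obtain ⟨x', hxC', hxN'⟩ := hwit C'
    have hxx : x = x' := by
      apply Subtype.ext
      have hidx : L.idxOf (x : V) = L.idxOf (x' : V) := by rw [hxN, hxN', hNN]
      exact (List.idxOf_inj (hmem _)).mp hidx
    rw [← hxC, ← hxC']
    exact congrArg _ hxx
  calc Nat.card G'.ConnectedComponent ≤ Nat.card ↥(S.erase u) :=
        Nat.card_le_card_of_injective f hinj
    _ = (S.erase u).card := Nat.card_eq_finsetCard _
    _ = S.card - 1 := Finset.card_erase_of_mem hu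

/-- Every hamiltonian-connected graph on at least four vertices has toughness larger
than 1. -/
theorem stmt_16 {V : Type*} [Fintype V] [DecidableEq V] (G : SimpleGraph V)
    (hcard : 4 ≤ Fintype.card V) (hhc : HamConn G) :
    ∀ S : Finset V, 2 ≤ omegaDel G S → omegaDel G S < S.card := by
  classical
  intro S hS
  rcases lt_or_ge S.card 2 with hS2 | hS2
  · exfalso
    set T : Set V := ((S : Set V)ᶜ) with hT
    have hS' : 2 ≤ Nat.card ((G.induce T).ConnectedComponent) := hS
    have hnt : Nontrivial ((G.induce T).ConnectedComponent) := by
      rw [← Finite.one_lt_card_iff_nontrivial]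
      omega
    obtain ⟨C, D, hCD⟩ := hnt
    obtain ⟨a, ha⟩ := C.exists_rep
    obtain ⟨b, hb⟩ := D.exists_rep
    have hab : ¬ (G.induce T).Reachable a b := fun h =>
      hCD ((ha.symm.trans (ConnectedComponent.sound h)).trans hb)
    have habne : a ≠ b := fun h => hab (h ▸ Reachable.refl a)
    have hcases : S.card = 0 ∨ S.card = 1 := by omega
    rcases hcases with h0 | h1
    · have hSe : S = ∅ := Finset.card_eq_zero.mp h0
      obtain ⟨p, hp⟩ := hhc ↑a ↑b (fun h => habne (Subtype.ext h))
      refine hab (aux_reach p (fun x _ => ?_) a.2 b.2)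
      rw [hT, hSe]; simp
    · obtain ⟨s, hs⟩ := Finset.card_eq_one.mp h1
      have hTmem : ∀ x : V, x ≠ s → x ∈ T := by intro x hx; rw [hT, hs]; simp [hx]
      have hTne : ∀ x : T, (x : V) ≠ s := by
        intro x h
        have hx2 : (x : V) ∉ S := x.2
        rw [hs] at hx2
        apply hx2
        rw [h]
        simp
      have hcardT : 2 < Fintype.card T := by
        have h1' : Fintype.card T = Fintype.card V - S.card := by
          show Fintype.card ↥((S : Set V)ᶜ) = _
          rw [Fintype.card_compl_set]
          simp
        omega
      obtain ⟨c, hca, hcb⟩ : ∃ c : T, c ≠ a ∧ c ≠ b := by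
        by_contra h
        push_neg at h
        have hsub : (Finset.univ : Finset T) ⊆ {a, b} := by
          intro x _
          rcases eq_or_ne x a with h' | h'
          · simp [h']
          · simp [h x h']
        have hle := Finset.card_le_card hsub
        have h2 : ({a, b} : Finset T).card ≤ 2 :=
          (Finset.card_insert_le _ _).trans (by simp)
        rw [Finset.card_univ] at hle
        omega
      have coe_ne : ∀ {x y : T}, x ≠ y → (x : V) ≠ (y : V) := fun h h' => h (Subtype.ext h')
      have reach_of : ∀ {x y : V} (q : G.Walk x y), s ∉ q.support →
          ∀ (hx : x ∈ T) (hy : y ∈ T), (G.induce T).Reachable ⟨x, hx⟩ ⟨y, hy⟩ := by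
        intro x y q hq hx hy
        exact aux_reach q (fun z hz => hTmem z (fun he => hq (he ▸ hz))) hx hy
      by_cases hac : (G.induce T).Reachable a c
      · obtain ⟨p, hp⟩ := hhc ↑a ↑c (coe_ne (Ne.symm hca))
        rcases aux_key1 p hp.isPath.support_nodup (hp.mem_support ↑b) (hTne b) with
          ⟨q, hq⟩ | ⟨q, hq⟩
        · exact hab (reach_of q hq a.2 b.2)
        · exact hab (hac.trans (reach_of q hq b.2 c.2).symm)
      by_cases hcb2 : (G.induce T).Reachable c b
      · obtain ⟨p, hp⟩ := hhc ↑c ↑b (coe_ne hcb)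
        rcases aux_key1 p hp.isPath.support_nodup (hp.mem_support ↑a) (hTne a) with
          ⟨q, hq⟩ | ⟨q, hq⟩
        · exact hab ((reach_of q hq c.2 a.2).symm.trans hcb2)
        · exact hab (reach_of q hq a.2 b.2)
      · obtain ⟨p, hp⟩ := hhc ↑a ↑b (coe_ne habne)
        rcases aux_key1 p hp.isPath.support_nodup (hp.mem_support ↑c) (hTne c) with
          ⟨q, hq⟩ | ⟨q, hq⟩
        · exact hac (reach_of q hq a.2 c.2)
        · exact hcb2 (reach_of q hq c.2 b.2)
  · obtain ⟨u', hu', v', hv', huv⟩ := Finset.one_lt_card.mp hS2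
    obtain ⟨p, hp⟩ := hhc u' v' huv
    have hc := aux_count G S hu' hv' p hp
    have hS'' : omegaDel G S ≤ S.card - 1 := hc
    omega
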